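/- For every integer n ≥ 1, 10·∑_{k=1}^{n} F_k^3 = F_{3n+2} - (-1)^n·6·F_{n-1} + 5. -/

import Mathlib

private lemma cassini (k : ℕ) :
    (Nat.fib (k+1) : ℤ)^2 - Nat.fib (k+1) * Nat.fib k - (Nat.fib k : ℤ)^2 = (-1)^k := by
  induction k with
  | zero => simp
  | succ k ih =>
    rw [Nat.fib_add_two] at *
    push_cast at *
    ring_nf at ih ⊢
    linarith [ih]

private lemma aux (k : ℕ) :
    (Nat.fib (3*k) : ℤ) = 5 * (Nat.fib k : ℤ)^3 + 3 * (-1)^k * Nat.fib k ∧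
    (Nat.fib (3*k+1) : ℤ) =
      (Nat.fib (k+1) : ℤ)^3 + 3 * (Nat.fib k : ℤ)^2 * Nat.fib (k+1) - (Nat.fib k : ℤ)^3 := by
  induction k with
  | zero => simp
  | succ k ih =>
    obtain ⟨h0, h1⟩ := ih
    have hc := cassini k
    have h2 : (Nat.fib (3*k+2) : ℤ) = Nat.fib (3*k+1) + Nat.fib (3*k) := by
      rw [Nat.fib_add_two]; push_cast; ring
    have h3 : (Nat.fib (3*k+3) : ℤ) = Nat.fib (3*k+2) + Nat.fib (3*k+1) := by
      rw [show 3*k+3 = (3*k+1)+2 by ring, Nat.fib_add_two]; push_cast; ring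
    have h4 : (Nat.fib (3*k+4) : ℤ) = Nat.fib (3*k+3) + Nat.fib (3*k+2) := by
      rw [show 3*k+4 = (3*k+2)+2 by ring, Nat.fib_add_two]; push_cast; ring
    have hb : (Nat.fib (k+2) : ℤ) = Nat.fib (k+1) + Nat.fib k := by
      rw [Nat.fib_add_two]; push_cast; ring
    have e3 : 3*(k+1) = 3*k+3 := by ring
    have e4 : 3*k+3+1 = 3*k+4 := by ring
    have hsn : (-1:ℤ)^(k+1) = -(-1)^k := by ring
    rw [e3, e4, show k+1+1 = k+2 from rfl, hsn, h4, h3, h2, hb, h0, h1]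
    constructor
    · nlinarith [hc]
    · nlinarith [hc]

theorem stmt_2 (n : ℕ) (hn : 1 ≤ n) :
    10 * ∑ k ∈ Finset.Icc 1 n, (Nat.fib k : ℤ) ^ 3 =
      (Nat.fib (3 * n + 2) : ℤ) - (-1) ^ n * 6 * Nat.fib (n - 1) + 5 := by
  induction n, hn using Nat.le_induction with
  | base =>
    norm_num [show Nat.fib 5 = 5 from by decide]
  | succ n hn ih =>
    rw [Finset.sum_Icc_succ_top (by omega : 1 ≤ n + 1), mul_add, ih]
    have h0 := (aux (n+1)).1
    rw [show 3*(n+1) = 3*n+3 from by ring] at h0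
    have hA : (Nat.fib (3*n+5) : ℤ) = Nat.fib (3*n+4) + Nat.fib (3*n+3) := by
      rw [show 3*n+5 = (3*n+3)+2 by ring, Nat.fib_add_two]; push_cast; ring
    have hB : (Nat.fib (3*n+4) : ℤ) = Nat.fib (3*n+3) + Nat.fib (3*n+2) := by
      rw [show 3*n+4 = (3*n+2)+2 by ring, Nat.fib_add_two]; push_cast; ring
    have hfib : (Nat.fib (n+1) : ℤ) = Nat.fib n + Nat.fib (n-1) := by
      rw [show n + 1 = (n-1)+2 by omega, Nat.fib_add_two]
      push_cast
      rw [show n - 1 + 1 = n by omega]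
      ring
    rw [show 3*(n+1)+2 = 3*n+5 from by ring, show n+1-1 = n from by omega, hA, hB, h0]
    have hsn : (-1:ℤ)^(n+1) = -(-1)^n := by ring
    rw [hsn] at *
    rw [hfib]
    ring
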